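/- Let a > 1 and M < a be a positive integer. Let X₁ be a real random variable with bounded density f_{X₁} ≤ f_max, and for each n let Ũ_n be a random variable taking at most M^n distinct values, each value constant on a measurable partition {I_m} of ℝ into M^n sets with X₁-measurability (Ũ_n = u(m) on {X₁ ∈ I_m}). Then for every bounded interval I, P(a^n·X₁ + Ũ_n ∈ I) ≤ M^n·a^{−n}·f_max·|I|, and hence P(a^n·X₁ + Ũ_n ∈ I) → 0 as n → ∞. -/

import Mathlib

open MeasureTheory Filter

/-- Converse for stability in probability: with `a > 1`, a positive integer `M < a`,
`X₁` with density bounded by `fmax`, and each `Ũ_n` taking at most `M^n` values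
(constant on a measurable partition of `ℝ` pulled back through `X₁`), for every bounded
interval `[c, d]` one has `P(a^n·X₁ + Ũ_n ∈ [c, d]) ≤ M^n·a^(−n)·fmax·(d − c)`, and
hence this probability tends to `0` as `n → ∞`. -/
theorem stmt_14 {Ω : Type*} [MeasurableSpace Ω] (μ : Measure Ω) [IsProbabilityMeasure μ]
    (a : ℝ) (ha : 1 < a) (M : ℕ) (hM : 0 < M) (hMa : (M : ℝ) < a)
    (X₁ : Ω → ℝ) (hX : Measurable X₁)
    (f : ℝ → ℝ) (fmax : ℝ) (hf0 : ∀ x, 0 ≤ f x) (hfb : ∀ x, f x ≤ fmax)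
    (hdens : Measure.map X₁ μ = volume.withDensity (fun x => ENNReal.ofReal (f x)))
    (U : ℕ → Ω → ℝ)
    (hU : ∀ n, ∃ (I : Fin (M ^ n) → Set ℝ) (u : Fin (M ^ n) → ℝ),
      (∀ m, MeasurableSet (I m)) ∧ Pairwise (Function.onFun Disjoint I) ∧
      (⋃ m, I m) = Set.univ ∧ (∀ ω m, X₁ ω ∈ I m → U n ω = u m))
    (c d : ℝ) (hcd : c ≤ d) :
    (∀ n, μ {ω | a ^ n * X₁ ω + U n ω ∈ Set.Icc c d}
        ≤ ENNReal.ofReal ((M : ℝ) ^ n / a ^ n * fmax * (d - c))) ∧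
      Tendsto (fun n => μ {ω | a ^ n * X₁ ω + U n ω ∈ Set.Icc c d}) atTop (nhds 0) := by
  have ha0 : (0:ℝ) < a := lt_trans one_pos ha
  have hfmax : 0 ≤ fmax := le_trans (hf0 0) (hfb 0)
  have key : ∀ n, μ {ω | a ^ n * X₁ ω + U n ω ∈ Set.Icc c d}
      ≤ ENNReal.ofReal ((M : ℝ) ^ n / a ^ n * fmax * (d - c)) := by
    intro n
    have han : (0:ℝ) < a ^ n := pow_pos ha0 n
    obtain ⟨I, u, hIm, hdisj, hcov, hu⟩ := hU n
    set J : Fin (M ^ n) → Set ℝ :=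
      fun m => Set.Icc ((c - u m) / a ^ n) ((d - u m) / a ^ n) with hJ
    have hsub : {ω | a ^ n * X₁ ω + U n ω ∈ Set.Icc c d} ⊆ ⋃ m, X₁ ⁻¹' (I m ∩ J m) := by
      intro ω hω
      have hx : X₁ ω ∈ ⋃ m, I m := by rw [hcov]; trivial
      obtain ⟨m, hm⟩ := Set.mem_iUnion.mp hx
      refine Set.mem_iUnion.mpr ⟨m, hm, ?_⟩
      have hUeq := hu ω m hm
      simp only [Set.mem_setOf_eq, hUeq, Set.mem_Icc] at hω
      constructor
      · rw [div_le_iff₀ han]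
        have := mul_comm (a ^ n) (X₁ ω)
        linarith [hω.1]
      · rw [le_div_iff₀ han]
        have := mul_comm (a ^ n) (X₁ ω)
        linarith [hω.2]
    have hvolJ : ∀ m, volume (J m) = ENNReal.ofReal ((d - c) / a ^ n) := by
      intro m
      rw [hJ]
      rw [Real.volume_Icc]
      congr 1
      field_simp
      ring
    calc μ {ω | a ^ n * X₁ ω + U n ω ∈ Set.Icc c d}
        ≤ μ (⋃ m, X₁ ⁻¹' (I m ∩ J m)) := measure_mono hsub
      _ ≤ ∑ m, μ (X₁ ⁻¹' (I m ∩ J m)) := measure_iUnion_fintype_le _ _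
      _ ≤ ∑ m : Fin (M ^ n), ENNReal.ofReal fmax * ENNReal.ofReal ((d - c) / a ^ n) := by
          refine Finset.sum_le_sum fun m _ => ?_
          have hmeas : MeasurableSet (I m ∩ J m) := (hIm m).inter measurableSet_Icc
          have hmap : μ (X₁ ⁻¹' (I m ∩ J m)) = Measure.map X₁ μ (I m ∩ J m) :=
            (Measure.map_apply hX hmeas).symm
          rw [hmap, hdens, withDensity_apply _ hmeas]
          calc ∫⁻ x in I m ∩ J m, ENNReal.ofReal (f x) ∂volume
              ≤ ∫⁻ _ in I m ∩ J m, ENNReal.ofReal fmax ∂volume :=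
                lintegral_mono fun x => ENNReal.ofReal_le_ofReal (hfb x)
            _ = ENNReal.ofReal fmax * volume (I m ∩ J m) := by
                rw [setLIntegral_const]
            _ ≤ ENNReal.ofReal fmax * volume (J m) := by
                exact mul_le_mul_right (measure_mono Set.inter_subset_right) _
            _ = ENNReal.ofReal fmax * ENNReal.ofReal ((d - c) / a ^ n) := by rw [hvolJ m]
      _ = (M ^ n : ℕ) * (ENNReal.ofReal fmax * ENNReal.ofReal ((d - c) / a ^ n)) := by
          rw [Finset.sum_const, Finset.card_univ, Fintype.card_fin, nsmul_eq_mul]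
      _ = ENNReal.ofReal ((M : ℝ) ^ n / a ^ n * fmax * (d - c)) := by
          rw [← ENNReal.ofReal_mul hfmax, ← ENNReal.ofReal_natCast (M ^ n),
            ← ENNReal.ofReal_mul (by positivity)]
          congr 1
          push_cast
          field_simp
  refine ⟨key, ?_⟩
  have hlim : Tendsto (fun n => ENNReal.ofReal ((M : ℝ) ^ n / a ^ n * fmax * (d - c)))
      atTop (nhds 0) := by
    have h1 : Tendsto (fun n : ℕ => ((M : ℝ) / a) ^ n * (fmax * (d - c))) atTop (nhds 0) := by
      have := (tendsto_pow_atTop_nhds_zero_of_lt_one (r := (M : ℝ) / a)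
        (by positivity) (by rw [div_lt_one ha0]; exact hMa)).mul_const (fmax * (d - c))
      simpa using this
    have h2 := (ENNReal.continuous_ofReal.tendsto 0).comp h1
    simp only [ENNReal.ofReal_zero] at h2
    refine h2.congr fun n => ?_
    simp only [Function.comp_apply]
    congr 1
    rw [div_pow]
    ring
  exact tendsto_of_tendsto_of_tendsto_of_le_of_le tendsto_const_nhds hlim
    (fun n => zero_le) key
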